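/- For every probability distribution u on {0,1,...,n} with mean c, there exist finitely many probability distributions t_1,...,t_m on {0,...,n}, each with support of size at most 2 and each with mean c, and nonnegative weights λ_1,...,λ_m summing to 1, such that u = Σ_i λ_i t_i. -/

import Mathlib

open Finset

private def Pdec (n : ℕ) (c : ℝ) (u : Fin (n + 1) → ℝ) : Prop :=
  ∃ (m : ℕ) (t : Fin m → Fin (n + 1) → ℝ) (lam : Fin m → ℝ),
    (∀ i, ∀ x, 0 ≤ t i x) ∧
    (∀ i, ∑ x, t i x = 1) ∧
    (∀ i, (Finset.univ.filter (fun x => t i x ≠ 0)).card ≤ 2) ∧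
    (∀ i, ∑ x : Fin (n + 1), ((x : ℕ) : ℝ) * t i x = c) ∧
    (∀ i, 0 ≤ lam i) ∧ (∑ i, lam i = 1) ∧
    (∀ x, u x = ∑ i, lam i * t i x)

private lemma pdec_single {n : ℕ} {c : ℝ} {u : Fin (n + 1) → ℝ}
    (h1 : ∀ x, 0 ≤ u x) (h2 : ∑ x, u x = 1)
    (h3 : (Finset.univ.filter (fun x => u x ≠ 0)).card ≤ 2)
    (h4 : ∑ x : Fin (n + 1), ((x : ℕ) : ℝ) * u x = c) : Pdec n c u :=
  ⟨1, fun _ => u, fun _ => 1, fun _ => h1, fun _ => h2, fun _ => h3,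
    fun _ => h4, fun _ => zero_le_one, by simp, fun x => by simp⟩

private lemma pdec_mix {n : ℕ} {c l : ℝ} {v w : Fin (n + 1) → ℝ}
    (hv : Pdec n c v) (hw : Pdec n c w) (h0 : 0 ≤ l) (h1 : l ≤ 1) :
    Pdec n c (fun x => l * v x + (1 - l) * w x) := by
  obtain ⟨m1, t1, lam1, a1, b1, c1, d1, e1, f1, g1⟩ := hv
  obtain ⟨m2, t2, lam2, a2, b2, c2, d2, e2, f2, g2⟩ := hw
  refine ⟨m1 + m2, Fin.append t1 t2,
    Fin.append (fun i => l * lam1 i) (fun i => (1 - l) * lam2 i),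
    ?_, ?_, ?_, ?_, ?_, ?_, ?_⟩
  · intro i x
    refine Fin.addCases (fun j => ?_) (fun j => ?_) i <;> simp [a1 _ x, a2 _ x]
  · intro i
    refine Fin.addCases (fun j => ?_) (fun j => ?_) i <;> simp [b1, b2]
  · intro i
    refine Fin.addCases (fun j => ?_) (fun j => ?_) i <;> simp [c1, c2]
  · intro i
    refine Fin.addCases (fun j => ?_) (fun j => ?_) i <;> simp [d1, d2]
  · intro i
    refine Fin.addCases (fun j => ?_) (fun j => ?_) i <;>
      simp [mul_nonneg h0 (e1 _), mul_nonneg (by linarith : (0:ℝ) ≤ 1 - l) (e2 _)]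
  · rw [Fin.sum_univ_add]
    simp only [Fin.append_left, Fin.append_right]
    rw [← Finset.mul_sum, ← Finset.mul_sum, f1, f2]
    ring
  · intro x
    rw [Fin.sum_univ_add]
    simp only [Fin.append_left, Fin.append_right]
    rw [g1 x, g2 x, Finset.mul_sum, Finset.mul_sum]
    congr 1 <;> exact Finset.sum_congr rfl fun i _ => by ring

/-- Sum of a function vanishing at `a` and agreeing with `f` elsewhere. -/
private lemma sum_zero_at {n : ℕ} (f g : Fin (n + 1) → ℝ) (a : Fin (n + 1))
    (hg : g a = 0) (h : ∀ x, x ≠ a → g x = f x) :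
    ∑ x, g x = ∑ x, f x - f a := by
  rw [← Finset.add_sum_erase _ g (Finset.mem_univ a), hg, zero_add,
    Finset.sum_congr rfl (fun x hx => h x (Finset.ne_of_mem_erase hx)),
    Finset.sum_erase_eq_sub (Finset.mem_univ a)]

/-- Weighted sum of a two-point function. -/
private lemma sum_pair {n : ℕ} {a b : Fin (n + 1)} (hab : a ≠ b)
    (f : Fin (n + 1) → ℝ) (p q : ℝ) :
    ∑ x, f x * (if x = a then p else if x = b then q else 0)
      = f a * p + f b * q := by
  have step : ∀ x : Fin (n + 1),
      f x * (if x = a then p else if x = b then q else 0)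
        = (if x = a then f a * p else 0) + (if x = b then f b * q else 0) := by
    intro x
    rcases eq_or_ne x a with rfl | hxa
    · simp [hab]
    · rcases eq_or_ne x b with rfl | hxb
      · simp [hxa]
      · simp [hxa, hxb]
  rw [Finset.sum_congr rfl fun x _ => step x, Finset.sum_add_distrib]
  simp

set_option maxHeartbeats 2000000 in
private lemma pdec_main {n : ℕ} (k : ℕ) :
    ∀ u : Fin (n + 1) → ℝ, (∀ x, 0 ≤ u x) → (∑ x, u x = 1) →
    (Finset.univ.filter (fun x => u x ≠ 0)).card ≤ k →
    Pdec n (∑ x : Fin (n + 1), ((x : ℕ) : ℝ) * u x) u := by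
  induction k with
  | zero =>
    intro u hnn hsum hcard
    exfalso
    rw [Nat.le_zero, Finset.card_eq_zero, Finset.filter_eq_empty_iff] at hcard
    simp only [not_not] at hcard
    have : ∑ x, u x = 0 := Finset.sum_eq_zero fun x hx => hcard hx
    rw [hsum] at this; norm_num at this
  | succ k ih =>
    intro u hnn hsum hcard
    by_cases hsmall : (Finset.univ.filter (fun x => u x ≠ 0)).card ≤ 2
    · exact pdec_single hnn hsum hsmall rfl
    push_neg at hsmall
    set c : ℝ := ∑ x : Fin (n + 1), ((x : ℕ) : ℝ) * u x with hc
    -- find support points on both sides of c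
    have hex_a : ∃ a, u a ≠ 0 ∧ ((a : ℕ) : ℝ) ≤ c := by
      by_contra h
      push_neg at h
      have hzero : ∑ x : Fin (n + 1), (((x : ℕ) : ℝ) - c) * u x = 0 := by
        simp only [sub_mul]
        rw [Finset.sum_sub_distrib, ← hc, ← Finset.mul_sum, hsum]
        ring
      have hpos : 0 < ∑ x : Fin (n + 1), (((x : ℕ) : ℝ) - c) * u x := by
        obtain ⟨a, ha⟩ := Finset.card_pos.mp (by omega :
          0 < (Finset.univ.filter (fun x => u x ≠ 0)).card)
        rw [Finset.mem_filter] at ha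
        refine Finset.sum_pos' (fun x _ => ?_) ⟨a, Finset.mem_univ a, ?_⟩
        · rcases eq_or_ne (u x) 0 with h' | h'
          · simp [h']
          · nlinarith [h x h', (hnn x).lt_of_ne (Ne.symm h')]
        · nlinarith [h a ha.2, (hnn a).lt_of_ne (Ne.symm ha.2)]
      linarith
    have hex_b : ∃ b, u b ≠ 0 ∧ c ≤ ((b : ℕ) : ℝ) := by
      by_contra h
      push_neg at h
      have hzero : ∑ x : Fin (n + 1), (c - ((x : ℕ) : ℝ)) * u x = 0 := by
        simp only [sub_mul]
        rw [Finset.sum_sub_distrib, ← hc, ← Finset.mul_sum, hsum]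
        ring
      have hpos : 0 < ∑ x : Fin (n + 1), (c - ((x : ℕ) : ℝ)) * u x := by
        obtain ⟨a, ha⟩ := Finset.card_pos.mp (by omega :
          0 < (Finset.univ.filter (fun x => u x ≠ 0)).card)
        rw [Finset.mem_filter] at ha
        refine Finset.sum_pos' (fun x _ => ?_) ⟨a, Finset.mem_univ a, ?_⟩
        · rcases eq_or_ne (u x) 0 with h' | h'
          · simp [h']
          · nlinarith [h x h', (hnn x).lt_of_ne (Ne.symm h')]
        · nlinarith [h a ha.2, (hnn a).lt_of_ne (Ne.symm ha.2)]
      linarith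
    by_cases hcase : ∃ x, u x ≠ 0 ∧ ((x : ℕ) : ℝ) = c
    · -- Case A: some support point equals c exactly
      obtain ⟨a, ha, hac⟩ := hcase
      have hua : 0 < u a := (hnn a).lt_of_ne (Ne.symm ha)
      have hexy : ∃ y, y ≠ a ∧ u y ≠ 0 := by
        by_contra h
        push_neg at h
        have hsub : (Finset.univ.filter (fun x => u x ≠ 0)) ⊆ {a} := by
          intro x hx
          rw [Finset.mem_filter] at hx
          rcases eq_or_ne x a with rfl | hxa
          · simp
          · exact absurd hx.2 (not_not.mpr (h x hxa))
        have := Finset.card_le_card hsub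
        rw [Finset.card_singleton] at this
        omega
      obtain ⟨y, hya, hy⟩ := hexy
      have huy : 0 < u y := (hnn y).lt_of_ne (Ne.symm hy)
      have hlt : u a < 1 := by
        have hle : u a + u y ≤ ∑ x, u x := by
          have := Finset.sum_le_sum_of_subset_of_nonneg
            (Finset.insert_subset_iff.mpr ⟨Finset.mem_univ a,
              Finset.singleton_subset_iff.mpr (Finset.mem_univ y)⟩)
            (fun x _ _ => hnn x)
          rwa [Finset.sum_insert (by simpa using hya.symm),
            Finset.sum_singleton] at this
        rw [hsum] at hle; linarith
      have h1ua : (0:ℝ) < 1 - u a := by linarith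
      set v : Fin (n + 1) → ℝ := fun x => if x = a then 1 else 0 with hv
      set w : Fin (n + 1) → ℝ := fun x => if x = a then 0 else u x / (1 - u a)
        with hw
      have hwnn : ∀ x, 0 ≤ w x := by
        intro x; simp only [hw]
        split
        · exact le_refl 0
        · exact div_nonneg (hnn x) h1ua.le
      have hwsum : ∑ x, w x = 1 := by
        rw [sum_zero_at (fun x => u x / (1 - u a)) w a (by simp [hw])
          (fun x hx => by simp [hw, hx]), ← Finset.sum_div, hsum]
        field_simp
      have hwmean : ∑ x : Fin (n + 1), ((x : ℕ) : ℝ) * w x = c := by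
        rw [sum_zero_at (fun x => ((x : ℕ) : ℝ) * u x / (1 - u a))
          (fun x => ((x : ℕ) : ℝ) * w x) a (by simp [hw])
          (fun x hx => by simp [hw, hx]; ring), ← Finset.sum_div, ← hc, hac]
        field_simp
      have hwcard : (Finset.univ.filter (fun x => w x ≠ 0)).card ≤ k := by
        have hsub : (Finset.univ.filter (fun x => w x ≠ 0)) ⊆
            (Finset.univ.filter (fun x => u x ≠ 0)).erase a := by
          intro x hx
          rw [Finset.mem_filter] at hx
          rcases eq_or_ne x a with rfl | hxa
          · exact absurd (by simp [hw]) hx.2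
          · refine Finset.mem_erase.mpr ⟨hxa, Finset.mem_filter.mpr
              ⟨Finset.mem_univ x, fun h0 => hx.2 (by simp [hw, hxa, h0])⟩⟩
        have h1 := Finset.card_le_card hsub
        have h2 : a ∈ Finset.univ.filter (fun x => u x ≠ 0) :=
          Finset.mem_filter.mpr ⟨Finset.mem_univ a, ha⟩
        rw [Finset.card_erase_of_mem h2] at h1
        omega
      have hvP : Pdec n c v := by
        refine pdec_single (fun x => ?_) ?_ ?_ ?_
        · simp only [hv]; split <;> norm_num
        · simp [hv]
        · have hset : (Finset.univ.filter (fun x => v x ≠ 0)) = {a} := by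
            ext x
            simp only [hv, Finset.mem_filter, Finset.mem_univ, true_and,
              Finset.mem_singleton]
            rcases eq_or_ne x a with rfl | hxa
            · simp
            · simp [hxa]
          rw [hset, Finset.card_singleton]
          omega
        · rw [show (∑ x : Fin (n+1), ((x : ℕ) : ℝ) * v x) = ((a : ℕ) : ℝ) by
            simp [hv]]
          exact hac
      have hwP : Pdec n c w := by
        have := ih w hwnn hwsum hwcard
        rwa [hwmean] at this
      have := pdec_mix hvP hwP hua.le hlt.le
      have heq : (fun x => u a * v x + (1 - u a) * w x) = u := by
        funext x
        rcases eq_or_ne x a with rfl | hxa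
        · simp [hv, hw]
        · simp only [hv, hw, if_neg hxa]
          field_simp
          ring
      rwa [heq] at this
    · -- Case B: no support point equals c; two-sided strict
      push_neg at hcase
      obtain ⟨a, ha, hac⟩ := hex_a
      obtain ⟨b, hb, hbc⟩ := hex_b
      have hA : ((a : ℕ) : ℝ) < c := lt_of_le_of_ne hac (hcase a ha)
      have hB : c < ((b : ℕ) : ℝ) := lt_of_le_of_ne hbc (Ne.symm (hcase b hb))
      have hab : a ≠ b := by
        rintro rfl
        exact lt_irrefl _ (lt_trans hA hB)
      set A : ℝ := ((a : ℕ) : ℝ) with hAd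
      set B : ℝ := ((b : ℕ) : ℝ) with hBd
      have hAB : A < B := lt_trans hA hB
      have hBA : (0:ℝ) < B - A := by linarith
      set va : ℝ := (B - c) / (B - A) with hva
      set vb : ℝ := (c - A) / (B - A) with hvb
      have hva0 : 0 < va := div_pos (by linarith) hBA
      have hvb0 : 0 < vb := div_pos (by linarith) hBA
      have hvab : va + vb = 1 := by rw [hva, hvb]; field_simp; ring
      set v : Fin (n + 1) → ℝ :=
        fun x => if x = a then va else if x = b then vb else 0 with hv
      have hvsum : ∑ x, v x = 1 := by
        have := sum_pair hab (fun _ => (1:ℝ)) va vb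
        simpa [hv, hvab] using this
      have hvmean : ∑ x : Fin (n + 1), ((x : ℕ) : ℝ) * v x = c := by
        have := sum_pair hab (fun x : Fin (n + 1) => ((x : ℕ) : ℝ)) va vb
        rw [show (∑ x : Fin (n+1), ((x : ℕ) : ℝ) * v x)
          = A * va + B * vb from this]
        rw [hva, hvb]; field_simp; ring
      have hvnn : ∀ x, 0 ≤ v x := by
        intro x; simp only [hv]
        split
        · exact hva0.le
        · split
          · exact hvb0.le
          · exact le_refl 0
      set l : ℝ := min (u a / va) (u b / vb) with hl
      have hua : 0 < u a := (hnn a).lt_of_ne (Ne.symm ha)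
      have hub : 0 < u b := (hnn b).lt_of_ne (Ne.symm hb)
      have hl0 : 0 < l := lt_min (by positivity) (by positivity)
      have hlva : l * va ≤ u a := by
        have := min_le_left (u a / va) (u b / vb)
        rw [← hl] at this
        calc l * va ≤ (u a / va) * va := by nlinarith
          _ = u a := by field_simp
      have hlvb : l * vb ≤ u b := by
        have := min_le_right (u a / va) (u b / vb)
        rw [← hl] at this
        calc l * vb ≤ (u b / vb) * vb := by nlinarith
          _ = u b := by field_simp
      -- a third support point gives l < 1
      have hexy : ∃ y, y ≠ a ∧ y ≠ b ∧ u y ≠ 0 := by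
        by_contra h
        push_neg at h
        have hsub : (Finset.univ.filter (fun x => u x ≠ 0)) ⊆ {a, b} := by
          intro x hx
          rw [Finset.mem_filter] at hx
          rcases eq_or_ne x a with rfl | hxa
          · simp
          · rcases eq_or_ne x b with rfl | hxb
            · simp
            · exact absurd hx.2 (not_not.mpr (h x hxa hxb))
        have h1 := Finset.card_le_card hsub
        have h2 := Finset.card_insert_le a ({b} : Finset (Fin (n+1)))
        simp at h2
        omega
      obtain ⟨y, hya, hyb, hy⟩ := hexy
      have huy : 0 < u y := (hnn y).lt_of_ne (Ne.symm hy)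
      have hlt : l < 1 := by
        have hle : u a + u b + u y ≤ ∑ x, u x := by
          have hsub : ({a, b, y} : Finset (Fin (n + 1))) ⊆ Finset.univ :=
            fun x _ => Finset.mem_univ x
          have := Finset.sum_le_sum_of_subset_of_nonneg hsub
            (fun x _ _ => hnn x)
          rwa [Finset.sum_insert (by simp [hab, hya.symm]),
            Finset.sum_insert (by simp [hyb.symm]),
            Finset.sum_singleton, ← add_assoc] at this
        rw [hsum] at hle
        have : l = l * (va + vb) := by rw [hvab]; ring
        nlinarith
      have h1l : (0:ℝ) < 1 - l := by linarith
      set w : Fin (n + 1) → ℝ := fun x => (u x - l * v x) / (1 - l) with hw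
      have hwnn : ∀ x, 0 ≤ w x := by
        intro x
        show 0 ≤ (u x - l * v x) / (1 - l)
        apply div_nonneg _ h1l.le
        simp only [hv]
        split_ifs with h1 h2
        · rw [h1]; linarith
        · rw [h2]; linarith
        · simpa using hnn x
      have hwsum : ∑ x, w x = 1 := by
        simp only [hw]
        rw [← Finset.sum_div, Finset.sum_sub_distrib, ← Finset.mul_sum,
          hsum, hvsum]
        field_simp
      have hwmean : ∑ x : Fin (n + 1), ((x : ℕ) : ℝ) * w x = c := by
        have step : ∀ x : Fin (n + 1), ((x : ℕ) : ℝ) * w x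
            = (((x : ℕ) : ℝ) * u x - l * (((x : ℕ) : ℝ) * v x)) / (1 - l) := by
          intro x; rw [hw]; ring
        rw [Finset.sum_congr rfl fun x _ => step x, ← Finset.sum_div,
          Finset.sum_sub_distrib, ← Finset.mul_sum, ← hc, hvmean]
        field_simp
      -- one of a, b leaves the support of w
      have hzer : ∃ z, u z ≠ 0 ∧ w z = 0 := by
        rcases min_cases (u a / va) (u b / vb) with ⟨hmin, _⟩ | ⟨hmin, _⟩
        · refine ⟨a, ha, ?_⟩
          rw [hw]
          simp only [hv, if_pos rfl]
          rw [hl, hmin]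
          field_simp
          simp
        · refine ⟨b, hb, ?_⟩
          rw [hw]
          simp only [hv, if_neg hab.symm, if_pos rfl]
          rw [hl, hmin]
          field_simp
          simp
      obtain ⟨z, hz, hwz⟩ := hzer
      have hwcard : (Finset.univ.filter (fun x => w x ≠ 0)).card ≤ k := by
        have hsub : (Finset.univ.filter (fun x => w x ≠ 0)) ⊆
            (Finset.univ.filter (fun x => u x ≠ 0)).erase z := by
          intro x hx
          rw [Finset.mem_filter] at hx
          refine Finset.mem_erase.mpr ⟨fun h => hx.2 (h ▸ hwz),
            Finset.mem_filter.mpr ⟨Finset.mem_univ x, fun h0 => hx.2 ?_⟩⟩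
          have hxa : x ≠ a := fun h => ha (h ▸ h0)
          have hxb : x ≠ b := fun h => hb (h ▸ h0)
          rw [hw]
          simp [hv, hxa, hxb, h0]
        have h1 := Finset.card_le_card hsub
        have h2 : z ∈ Finset.univ.filter (fun x => u x ≠ 0) :=
          Finset.mem_filter.mpr ⟨Finset.mem_univ z, hz⟩
        rw [Finset.card_erase_of_mem h2] at h1
        omega
      have hvP : Pdec n c v := by
        refine pdec_single hvnn hvsum ?_ hvmean
        have hsub : (Finset.univ.filter (fun x => v x ≠ 0)) ⊆ {a, b} := by
          intro x hx
          rw [Finset.mem_filter] at hx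
          rcases eq_or_ne x a with rfl | hxa
          · simp
          · rcases eq_or_ne x b with rfl | hxb
            · simp
            · exact absurd (by simp [hv, hxa, hxb]) hx.2
        have h1 := Finset.card_le_card hsub
        have h2 := Finset.card_insert_le a ({b} : Finset (Fin (n+1)))
        simp at h2
        omega
      have hwP : Pdec n c w := by
        have := ih w hwnn hwsum hwcard
        rwa [hwmean] at this
      have := pdec_mix hvP hwP hl0.le hlt.le
      have heq : (fun x => l * v x + (1 - l) * w x) = u := by
        funext x
        rw [hw, mul_div_cancel₀ _ (ne_of_gt h1l)]
        ring
      rwa [heq] at this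

theorem stmt_12 (n : ℕ) (c : ℝ) (u : Fin (n + 1) → ℝ)
    (hunn : ∀ x, 0 ≤ u x) (husum : ∑ x, u x = 1)
    (humean : ∑ x : Fin (n + 1), ((x : ℕ) : ℝ) * u x = c) :
    ∃ (m : ℕ) (t : Fin m → Fin (n + 1) → ℝ) (lam : Fin m → ℝ),
      (∀ i, ∀ x, 0 ≤ t i x) ∧
      (∀ i, ∑ x, t i x = 1) ∧
      (∀ i, (Finset.univ.filter (fun x => t i x ≠ 0)).card ≤ 2) ∧
      (∀ i, ∑ x : Fin (n + 1), ((x : ℕ) : ℝ) * t i x = c) ∧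
      (∀ i, 0 ≤ lam i) ∧ (∑ i, lam i = 1) ∧
      (∀ x, u x = ∑ i, lam i * t i x) := by
  have := pdec_main (n := n) (Finset.univ.filter (fun x => u x ≠ 0)).card u
    hunn husum le_rfl
  rw [humean] at this
  exact this
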